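/- With 𝒮ᵢ and ℛᵢ as above, the mixed relation 𝒮_{i+1} ∘ 𝒮ᵢ ∘ ℛ_{i+1} = ℛᵢ ∘ 𝒮_{i+1} ∘ 𝒮ᵢ holds on the pair (Fₙ, Mₙ) for 1 ≤ i ≤ n−2. -/

import Mathlib

/-- The free group `Fₙ` on generators `x₀, …, x_{n-1}` (0-based indexing). -/
abbrev FG (n : ℕ) := FreeGroup (Fin n)
/-- The group ring `ℤ[Fₙ]`. -/
abbrev GR (n : ℕ) := MonoidAlgebra ℤ (FG n)
/-- The free `ℤ[Fₙ]`-module `Mₙ` on `K₀, …, K_{n-1}`. -/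
abbrev M (n : ℕ) := Fin n →₀ GR n

/-- The generator `xᵢ`. -/
def X {n : ℕ} (i : Fin n) : FG n := FreeGroup.of i
/-- The module generator `Kᵢ`. -/
noncomputable def K {n : ℕ} (i : Fin n) : M n := Finsupp.single i 1

/-- The action `g ▷ m` of `Fₙ` on `Mₙ`, via the `ℤ[Fₙ]`-module structure. -/
noncomputable def act {n : ℕ} (g : FG n) (m : M n) : M n :=
  (MonoidAlgebra.of ℤ (FG n) g) • m

def fin0 (n i : ℕ) (h : i + 1 < n) : Fin n := ⟨i, Nat.lt_of_succ_lt h⟩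
def fin1 (n i : ℕ) (h : i + 1 < n) : Fin n := ⟨i + 1, h⟩

/-- The additive endomorphism of `Mₙ`, semilinear over the group endomorphism `f1`
(i.e. `m ↦ g ▷ m` goes to `m ↦ f1 g ▷ m`), determined by the images `t i` of the
generators `K i`. -/
noncomputable def lift2 {n : ℕ} (f1 : FG n →* FG n) (t : Fin n → M n) : M n →+ M n :=
  Finsupp.liftAddHom fun i =>
    { toFun := fun r => (MonoidAlgebra.mapDomainRingHom ℤ f1 r) • t i
      map_zero' := by simp
      map_add' := by intro a b; simp only [map_add, add_smul] }

/-- First component of the lifted Artin automorphism `𝒮ᵢ`. -/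
def S1 (n i : ℕ) (h : i + 1 < n) : FG n →* FG n :=
  FreeGroup.lift fun j =>
    if (j : ℕ) = i then X (fin1 n i h)
    else if (j : ℕ) = i + 1 then (X (fin1 n i h))⁻¹ * X (fin0 n i h) * X (fin1 n i h)
    else X j

/-- Second component of the lifted Artin automorphism `𝒮ᵢ`:
`Kᵢ ↦ Kᵢ + K_{i+1} − x_{i+1}⁻¹ ▷ Kᵢ`, `K_{i+1} ↦ x_{i+1}⁻¹ ▷ Kᵢ`, fixing other `Kⱼ`,
extended semilinearly over `𝒮ᵢ¹`. -/
noncomputable def S2 (n i : ℕ) (h : i + 1 < n) : M n →+ M n :=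
  lift2 (S1 n i h) fun j =>
    if (j : ℕ) = i then
      K (fin0 n i h) + K (fin1 n i h) - act (X (fin1 n i h))⁻¹ (K (fin0 n i h))
    else if (j : ℕ) = i + 1 then act (X (fin1 n i h))⁻¹ (K (fin0 n i h))
    else K j

/-- First component of the inverse `𝒮̄ᵢ`: `xᵢ ↦ xᵢ x_{i+1} xᵢ⁻¹`, `x_{i+1} ↦ xᵢ`. -/
def Sbar1 (n i : ℕ) (h : i + 1 < n) : FG n →* FG n :=
  FreeGroup.lift fun j =>
    if (j : ℕ) = i then X (fin0 n i h) * X (fin1 n i h) * (X (fin0 n i h))⁻¹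
    else if (j : ℕ) = i + 1 then X (fin0 n i h)
    else X j

/-- Second component of the inverse `𝒮̄ᵢ`: `Kᵢ ↦ xᵢ ▷ K_{i+1}`,
`K_{i+1} ↦ Kᵢ + K_{i+1} − xᵢ ▷ K_{i+1}`, fixing other `Kⱼ`. -/
noncomputable def Sbar2 (n i : ℕ) (h : i + 1 < n) : M n →+ M n :=
  lift2 (Sbar1 n i h) fun j =>
    if (j : ℕ) = i then act (X (fin0 n i h)) (K (fin1 n i h))
    else if (j : ℕ) = i + 1 then
      K (fin0 n i h) + K (fin1 n i h) - act (X (fin0 n i h)) (K (fin1 n i h))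
    else K j

/-- First component of the transposition automorphism `ℛᵢ`. -/
def R1 (n i : ℕ) (h : i + 1 < n) : FG n →* FG n :=
  FreeGroup.lift fun j =>
    if (j : ℕ) = i then X (fin1 n i h)
    else if (j : ℕ) = i + 1 then X (fin0 n i h)
    else X j

/-- Second component of `ℛᵢ`: swaps `Kᵢ` and `K_{i+1}`, fixing other `Kⱼ`. -/
noncomputable def R2 (n i : ℕ) (h : i + 1 < n) : M n →+ M n :=
  lift2 (R1 n i h) fun j =>
    if (j : ℕ) = i then K (fin1 n i h)
    else if (j : ℕ) = i + 1 then K (fin0 n i h)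
    else K j

/-- First component of the inversion automorphism `𝒯ᵢ`: `xᵢ ↦ xᵢ⁻¹`. -/
def T1 (n i : ℕ) (h : i < n) : FG n →* FG n :=
  FreeGroup.lift fun j => if (j : ℕ) = i then (X (⟨i, h⟩ : Fin n))⁻¹ else X j

/-- Second component of `𝒯ᵢ`: fixes each `Kⱼ`, extended semilinearly over `𝒯ᵢ¹`. -/
noncomputable def T2 (n i : ℕ) (h : i < n) : M n →+ M n :=
  lift2 (T1 n i h) fun j => K j

section Helpers

variable {n : ℕ}

@[simp] lemma fin0_val (i : ℕ) (h : i + 1 < n) : ((fin0 n i h : Fin n) : ℕ) = i := rfl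
@[simp] lemma fin1_val (i : ℕ) (h : i + 1 < n) : ((fin1 n i h : Fin n) : ℕ) = i + 1 := rfl

lemma fin0_succ_eq (i : ℕ) (h2 : i + 2 < n) (h1 : i + 1 < n) :
    fin0 n (i + 1) h2 = fin1 n i h1 := rfl

lemma lift2_single (f1 : FG n →* FG n) (t : Fin n → M n) (j : Fin n) (r : GR n) :
    lift2 f1 t (Finsupp.single j r) = (MonoidAlgebra.mapDomainRingHom ℤ f1 r) • t j := by
  simp [lift2]

@[simp] lemma lift2_K (f1 : FG n →* FG n) (t : Fin n → M n) (j : Fin n) :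
    lift2 f1 t (K j) = t j := by
  simp [K, lift2_single]

lemma lift2_smul (f1 : FG n →* FG n) (t : Fin n → M n) (r : GR n) (m : M n) :
    lift2 f1 t (r • m) = (MonoidAlgebra.mapDomainRingHom ℤ f1 r) • lift2 f1 t m := by
  induction m using Finsupp.induction with
  | zero => simp
  | single_add j c s hj hc ih =>
      rw [smul_add, map_add, ih, map_add, smul_add, Finsupp.smul_single, lift2_single,
        lift2_single, smul_eq_mul, map_mul, mul_smul]

@[simp] lemma lift2_act (f1 : FG n →* FG n) (t : Fin n → M n) (g : FG n) (m : M n) :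
    lift2 f1 t (act g m) = act (f1 g) (lift2 f1 t m) := by
  rw [act, act, lift2_smul]
  congr 1
  simp [MonoidAlgebra.of_apply, MonoidAlgebra.mapDomainRingHom_apply, Finsupp.mapDomain_single]

lemma mapDomainRingHom_comp_apply (f g : FG n →* FG n) (r : GR n) :
    (MonoidAlgebra.mapDomainRingHom ℤ f) ((MonoidAlgebra.mapDomainRingHom ℤ g) r) =
      (MonoidAlgebra.mapDomainRingHom ℤ (f.comp g)) r := by
  rw [MonoidAlgebra.mapDomainRingHom_comp, RingHom.comp_apply]

@[simp] lemma S1_X (i : ℕ) (h : i + 1 < n) (j : Fin n) :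
    S1 n i h (X j) =
      if (j : ℕ) = i then X (fin1 n i h)
      else if (j : ℕ) = i + 1 then (X (fin1 n i h))⁻¹ * X (fin0 n i h) * X (fin1 n i h)
      else X j := by
  simp [S1, X]

@[simp] lemma R1_X (i : ℕ) (h : i + 1 < n) (j : Fin n) :
    R1 n i h (X j) =
      if (j : ℕ) = i then X (fin1 n i h)
      else if (j : ℕ) = i + 1 then X (fin0 n i h)
      else X j := by
  simp [R1, X]

@[simp] lemma S2_K (i : ℕ) (h : i + 1 < n) (j : Fin n) :
    S2 n i h (K j) =
      if (j : ℕ) = i then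
        K (fin0 n i h) + K (fin1 n i h) - act (X (fin1 n i h))⁻¹ (K (fin0 n i h))
      else if (j : ℕ) = i + 1 then act (X (fin1 n i h))⁻¹ (K (fin0 n i h))
      else K j := by
  simp [S2]

@[simp] lemma R2_K (i : ℕ) (h : i + 1 < n) (j : Fin n) :
    R2 n i h (K j) =
      if (j : ℕ) = i then K (fin1 n i h)
      else if (j : ℕ) = i + 1 then K (fin0 n i h)
      else K j := by
  simp [R2]

lemma S2_smul (i : ℕ) (h : i + 1 < n) (r : GR n) (m : M n) :
    S2 n i h (r • m) = (MonoidAlgebra.mapDomainRingHom ℤ (S1 n i h) r) • S2 n i h m :=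
  lift2_smul _ _ r m

lemma R2_smul (i : ℕ) (h : i + 1 < n) (r : GR n) (m : M n) :
    R2 n i h (r • m) = (MonoidAlgebra.mapDomainRingHom ℤ (R1 n i h) r) • R2 n i h m :=
  lift2_smul _ _ r m

@[simp] lemma S2_act (i : ℕ) (h : i + 1 < n) (g : FG n) (m : M n) :
    S2 n i h (act g m) = act (S1 n i h g) (S2 n i h m) :=
  lift2_act _ _ g m

@[simp] lemma R2_act (i : ℕ) (h : i + 1 < n) (g : FG n) (m : M n) :
    R2 n i h (act g m) = act (R1 n i h g) (R2 n i h m) :=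
  lift2_act _ _ g m

end Helpers

/-- mixed relation `𝒮_{i+1} ∘ 𝒮ᵢ ∘ ℛ_{i+1} = ℛᵢ ∘ 𝒮_{i+1} ∘ 𝒮ᵢ` for the
automorphisms of the pair `(Fₙ, Mₙ)`. -/
theorem liftedArtin_mixed_SSR (n i : ℕ) (h2 : i + 2 < n) (h1 : i + 1 < n) :
    (S1 n (i + 1) h2).comp ((S1 n i h1).comp (R1 n (i + 1) h2)) =
      (R1 n i h1).comp ((S1 n (i + 1) h2).comp (S1 n i h1)) ∧
    (S2 n (i + 1) h2).comp ((S2 n i h1).comp (R2 n (i + 1) h2)) =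
      (R2 n i h1).comp ((S2 n (i + 1) h2).comp (S2 n i h1)) := by
  have e1 : i ≠ i + 1 := by omega
  have e2 : i ≠ i + 1 + 1 := by omega
  have e3 : i + 1 ≠ i := by omega
  have e4 : i + 1 ≠ i + 1 + 1 := by omega
  have e5 : i + 1 + 1 ≠ i := by omega
  have e6 : i + 1 + 1 ≠ i + 1 := by omega
  have hfa : fin0 n (i + 1) h2 = fin1 n i h1 := rfl
  have part1 : (S1 n (i + 1) h2).comp ((S1 n i h1).comp (R1 n (i + 1) h2)) =
      (R1 n i h1).comp ((S1 n (i + 1) h2).comp (S1 n i h1)) := by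
    apply FreeGroup.ext_hom
    intro a
    show (S1 n (i + 1) h2) ((S1 n i h1) ((R1 n (i + 1) h2) (X a))) =
        (R1 n i h1) ((S1 n (i + 1) h2) ((S1 n i h1) (X a)))
    rcases eq_or_ne (a : ℕ) i with ha | ha
    · simp [ha, e1, e2, e3, e4, e5, e6, hfa]
    rcases eq_or_ne (a : ℕ) (i + 1) with hb | hb
    · simp [hb, e1, e2, e3, e4, e5, e6, hfa]
    rcases eq_or_ne (a : ℕ) (i + 1 + 1) with hc | hc
    · simp [hc, e1, e2, e3, e4, e5, e6, hfa]
    · simp [ha, hb, hc, e1, e2, e3, e4, e5, e6]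
  refine ⟨part1, ?_⟩
  apply Finsupp.addHom_ext
  intro j r
  have hs : (Finsupp.single j r : M n) = r • K j := by simp [K, Finsupp.smul_single]
  simp only [AddMonoidHom.comp_apply, hs]
  rw [R2_smul, S2_smul, S2_smul, S2_smul, S2_smul, R2_smul,
    mapDomainRingHom_comp_apply, mapDomainRingHom_comp_apply,
    mapDomainRingHom_comp_apply, mapDomainRingHom_comp_apply]
  have hg : ((S1 n (i + 1) h2).comp (S1 n i h1)).comp (R1 n (i + 1) h2) =
      ((R1 n i h1).comp (S1 n (i + 1) h2)).comp (S1 n i h1) := by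
    rw [MonoidHom.comp_assoc, MonoidHom.comp_assoc, part1]
  rw [hg]
  congr 1
  rcases eq_or_ne (j : ℕ) i with ha | ha
  · simp [ha, e1, e2, e3, e4, e5, e6, hfa]
    abel
  rcases eq_or_ne (j : ℕ) (i + 1) with hb | hb
  · simp [hb, e1, e2, e3, e4, e5, e6, hfa]
  rcases eq_or_ne (j : ℕ) (i + 1 + 1) with hc | hc
  · simp [hc, e1, e2, e3, e4, e5, e6, hfa]
  · simp [ha, hb, hc, e1, e2, e3, e4, e5, e6]
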